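/- Let s₁ and s₂ be related strings of length n and let T be any finite set of blocks of (s₁, s₂) such that any two distinct blocks in T do not overlap. Then the quantity n − Σ_{b∈T}(t_b − 1) is an upper bound on the minimum size of a common partition of s₁ and s₂, i.e., the minimum common partition size is at most n − Σ_{b∈T}(t_b − 1). -/

import Mathlib

/-- A common partition of strings `s₁` and `s₂`: a multiset of nonempty strings
(represented by the two orderings `P₁`, `P₂`, which are permutations of each other)
whose concatenations are `s₁` and `s₂` respectively. -/
def CommonPartition {α : Type*} (s₁ s₂ : List α) (P₁ P₂ : List (List α)) : Prop :=
  P₁.Perm P₂ ∧ (∀ p ∈ P₁, p ≠ []) ∧ P₁.flatten = s₁ ∧ P₂.flatten = s₂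

/-- A block of the pair of strings `(s₁, s₂)`: a triple `(k¹, k², t)` with `t ≥ 1`,
`k¹ + t ≤ |s₁|`, `k² + t ≤ |s₂|`, and the substring of `s₁` of length `t` starting at
`k¹` equals the substring of `s₂` of length `t` starting at `k²`. -/
def IsBlock {α : Type*} (s₁ s₂ : List α) (b : ℕ × ℕ × ℕ) : Prop :=
  1 ≤ b.2.2 ∧ b.1 + b.2.2 ≤ s₁.length ∧ b.2.1 + b.2.2 ≤ s₂.length ∧
    (s₁.drop b.1).take b.2.2 = (s₂.drop b.2.1).take b.2.2

/-- Blocks `bᵢ = (kᵢ¹, kᵢ², tᵢ)` and `b_j = (k_j¹, k_j², t_j)` overlap if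
`kᵢ¹ − t_j < k_j¹ < kᵢ¹ + tᵢ` or `kᵢ² − t_j < k_j² < kᵢ² + tᵢ` (over the integers). -/
def Overlap (bi bj : ℕ × ℕ × ℕ) : Prop :=
  ((bi.1 : ℤ) - bj.2.2 < bj.1 ∧ (bj.1 : ℤ) < bi.1 + bi.2.2) ∨
  ((bi.2.1 : ℤ) - bj.2.2 < bj.2.1 ∧ (bj.2.1 : ℤ) < bi.2.1 + bi.2.2)


namespace MCPAux

def cut {α : Type*} (s : List α) (off : ℕ) : List (ℕ × ℕ) → List (List α)
  | [] => s.map (fun a => [a])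
  | (k, t) :: L =>
      (s.take (k - off)).map (fun a => [a]) ++ ((s.drop (k - off)).take t) ::
        cut ((s.drop (k - off)).drop t) (k + t) L

def Good (off n : ℕ) : List (ℕ × ℕ) → Prop
  | [] => True
  | (k, t) :: L => off ≤ k ∧ 1 ≤ t ∧ k + t ≤ n ∧ Good (k + t) n L

variable {α : Type*}

lemma map_singleton_flatten (s : List α) : (s.map (fun a => [a])).flatten = s := by
  induction s <;> simp [*]

lemma cut_flatten : ∀ (L : List (ℕ × ℕ)) (s : List α) (off : ℕ),
    (cut s off L).flatten = s
  | [], s, off => map_singleton_flatten s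
  | (k, t) :: L, s, off => by
    simp only [cut, List.flatten_append, List.flatten_cons, map_singleton_flatten,
      cut_flatten L]
    rw [List.take_append_drop, List.take_append_drop]

lemma good_start : ∀ {L : List (ℕ × ℕ)} {off n : ℕ}, Good off n L → ∀ p ∈ L, off ≤ p.1
  | [], _, _, _, p, hp => by cases hp
  | (k, t) :: L, off, n, h, p, hp => by
    obtain ⟨h1, h2, h3, h4⟩ := h
    rcases List.mem_cons.mp hp with hp | hp
    · exact hp ▸ h1
    · exact le_trans (by omega) (good_start h4 p hp)

lemma cut_length : ∀ (L : List (ℕ × ℕ)) (s : List α) (off : ℕ),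
    Good off (off + s.length) L →
    (cut s off L).length + (L.map (fun p => p.2 - 1)).sum = s.length
  | [], s, off, _ => by simp [cut]
  | (k, t) :: L, s, off, h => by
    obtain ⟨h1, h2, h3, h4⟩ := h
    have hmt : k - off + t ≤ s.length := by omega
    have hlen : ((s.drop (k - off)).drop t).length = s.length - (k - off) - t := by
      simp; omega
    have hG : Good (k + t) ((k + t) + ((s.drop (k - off)).drop t).length) L := by
      rw [hlen]
      have : (k + t) + (s.length - (k - off) - t) = off + s.length := by omega
      rwa [this]
    have ih := cut_length L ((s.drop (k - off)).drop t) (k + t) hG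
    simp only [cut, List.length_append, List.length_map, List.length_take,
      List.length_cons, List.map_cons, List.sum_cons] at ih ⊢
    rw [hlen] at ih
    omega

lemma cut_ne_nil : ∀ (L : List (ℕ × ℕ)) (s : List α) (off : ℕ),
    Good off (off + s.length) L → ∀ p ∈ cut s off L, p ≠ []
  | [], s, off, _, p, hp => by
    simp only [cut, List.mem_map] at hp
    obtain ⟨a, -, rfl⟩ := hp
    simp
  | (k, t) :: L, s, off, h, p, hp => by
    obtain ⟨h1, h2, h3, h4⟩ := h
    have hmt : k - off + t ≤ s.length := by omega
    have hlen : ((s.drop (k - off)).drop t).length = s.length - (k - off) - t := by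
      simp; omega
    have hG : Good (k + t) ((k + t) + ((s.drop (k - off)).drop t).length) L := by
      rw [hlen]
      have : (k + t) + (s.length - (k - off) - t) = off + s.length := by omega
      rwa [this]
    simp only [cut, List.mem_append, List.mem_cons, List.mem_map] at hp
    rcases hp with ⟨a, -, rfl⟩ | rfl | hp
    · simp
    · have : ((s.drop (k - off)).take t).length = t := by
        simp; omega
      intro hnil
      rw [hnil] at this
      simp at this
      omega
    · exact cut_ne_nil L _ _ hG p hp

lemma cut_multiset : ∀ (L : List (ℕ × ℕ)) (s : List α) (off : ℕ),
    Good off (off + s.length) L →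
    ∃ u : List α,
      ((cut s off L : List (List α)) : Multiset (List α)) =
        (↑(L.map (fun p => (s.drop (p.1 - off)).take p.2)) : Multiset (List α)) +
          ↑(u.map (fun a => [a]))
      ∧ (s : Multiset α) =
        (↑((L.map (fun p => (s.drop (p.1 - off)).take p.2)).flatten) : Multiset α) + ↑u
  | [], s, off, _ => ⟨s, by simp [cut], by simp⟩
  | (k, t) :: L, s, off, h => by
    obtain ⟨h1, h2, h3, h4⟩ := h
    have hmt : k - off + t ≤ s.length := by omega
    set s' := (s.drop (k - off)).drop t with hs'
    have hlen : s'.length = s.length - (k - off) - t := by simp [hs']; omega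
    have hG : Good (k + t) ((k + t) + s'.length) L := by
      rw [hlen]
      have : (k + t) + (s.length - (k - off) - t) = off + s.length := by omega
      rwa [this]
    obtain ⟨u, hu1, hu2⟩ := cut_multiset L s' (k + t) hG
    have hpieces : L.map (fun p => (s'.drop (p.1 - (k + t))).take p.2)
        = L.map (fun p => (s.drop (p.1 - off)).take p.2) := by
      apply List.map_congr_left
      intro p hp
      have hpk : k + t ≤ p.1 := good_start h4 p hp
      have : s'.drop (p.1 - (k + t)) = s.drop (p.1 - off) := by
        rw [hs', List.drop_drop, List.drop_drop]
        congr 1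
        omega
      rw [this]
    rw [hpieces] at hu1 hu2
    refine ⟨s.take (k - off) ++ u, ?_, ?_⟩
    · show ((cut s off ((k,t) :: L) : List (List α)) : Multiset (List α)) = _
      simp only [cut, List.map_cons, List.map_append, ← Multiset.cons_coe,
        ← Multiset.coe_add, ← Multiset.singleton_add, ← hs']
      rw [hu1]
      abel
    · have hsplit : s = s.take (k - off) ++ ((s.drop (k - off)).take t ++ s') := by
        rw [hs', List.take_append_drop, List.take_append_drop]
      conv_lhs => rw [hsplit]
      simp only [List.map_cons, List.flatten_cons, ← Multiset.coe_add]
      rw [hu2]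
      abel

lemma good_of_pairwise {n off : ℕ} : ∀ (L : List (ℕ × ℕ)),
    L.Pairwise (fun p q => p.1 + p.2 ≤ q.1) →
    (∀ p ∈ L, 1 ≤ p.2 ∧ p.1 + p.2 ≤ n) → (∀ p ∈ L, off ≤ p.1) → Good off n L
  | [], _, _, _ => trivial
  | (k, t) :: L, hpw, hb, hoff => by
    have hb0 := hb (k, t) (List.mem_cons_self)
    refine ⟨hoff (k, t) (List.mem_cons_self), hb0.1, hb0.2, ?_⟩
    exact good_of_pairwise L hpw.of_cons (fun p hp => hb p (List.mem_cons_of_mem _ hp))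
      (fun p hp => (List.pairwise_cons.mp hpw).1 p hp)

lemma flatten_perm {l₁ l₂ : List (List α)} (h : l₁.Perm l₂) : l₁.flatten.Perm l₂.flatten := by
  induction h with
  | nil => rfl
  | cons x _ ih => simpa using ih.append_left x
  | swap x y l =>
    simp only [List.flatten_cons, ← List.append_assoc]
    exact (List.perm_append_comm).append_right _
  | trans _ _ ih₁ ih₂ => exact ih₁.trans ih₂

end MCPAux

namespace MCPAux
variable {α : Type*}

lemma exists_good (n : ℕ) (l : List (ℕ × ℕ))
    (hd : l.Pairwise (fun p q => p.1 + p.2 ≤ q.1 ∨ q.1 + q.2 ≤ p.1))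
    (hb : ∀ p ∈ l, 1 ≤ p.2 ∧ p.1 + p.2 ≤ n) :
    ∃ L : List (ℕ × ℕ), L.Perm l ∧ Good 0 n L := by
  classical
  let r : ℕ × ℕ → ℕ × ℕ → Prop := fun p q => p.1 ≤ q.1
  haveI : DecidableRel r := fun p q => inferInstanceAs (Decidable (p.1 ≤ q.1))
  haveI : IsTotal (ℕ × ℕ) r := ⟨fun a b => le_total a.1 b.1⟩
  haveI : IsTrans (ℕ × ℕ) r := ⟨fun a b c h₁ h₂ => le_trans h₁ h₂⟩
  have hperm := List.perm_insertionSort r l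
  refine ⟨List.insertionSort r l, hperm, ?_⟩
  have hsorted : (List.insertionSort r l).Pairwise r := List.pairwise_insertionSort r l
  have hd' : (List.insertionSort r l).Pairwise
      (fun p q => p.1 + p.2 ≤ q.1 ∨ q.1 + q.2 ≤ p.1) :=
    ((hperm.pairwise_iff (fun h => h.symm)).2 hd)
  apply good_of_pairwise
  · refine (hsorted.and hd').imp_of_mem ?_
    intro a b _ hbmem h
    rcases h.2 with h2 | h2
    · exact h2
    · have hb1 := (hb b (hperm.subset hbmem)).1
      have hr : a.1 ≤ b.1 := h.1
      omega
  · intro p hp; exact hb p (hperm.subset hp)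
  · intro p _; exact Nat.zero_le _

end MCPAux

/-- For related strings of length `n` and any set `T` of pairwise non-overlapping
blocks, the minimum size of a common partition is at most `n − Σ_{b∈T} (t_b − 1)`. -/
theorem min_commonPartition_le {α : Type*} (s₁ s₂ : List α) (n : ℕ)
    (h₁ : s₁.length = n) (h₂ : s₂.length = n) (hrel : s₁.Perm s₂)
    (T : Finset (ℕ × ℕ × ℕ)) (hT : ∀ b ∈ T, IsBlock s₁ s₂ b)
    (hno : ∀ b ∈ T, ∀ b' ∈ T, b ≠ b' → ¬ Overlap b b') :
    sInf {m : ℕ | ∃ P₁ P₂ : List (List α),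
        CommonPartition s₁ s₂ P₁ P₂ ∧ P₁.length = m} ≤
      n - ∑ b ∈ T, (b.2.2 - 1) := by
  classical
  set l := T.toList with hldef
  have hnd : l.Pairwise (· ≠ ·) := T.nodup_toList
  have hmemT : ∀ b ∈ l, b ∈ T := fun b hb => Finset.mem_toList.mp hb
  have hdis : l.Pairwise (fun b b' =>
      (b.1 + b.2.2 ≤ b'.1 ∨ b'.1 + b'.2.2 ≤ b.1) ∧
      (b.2.1 + b.2.2 ≤ b'.2.1 ∨ b'.2.1 + b'.2.2 ≤ b.2.1)) := by
    refine hnd.imp_of_mem ?_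
    intro b b' hbm hbm' hne
    have hnov := hno b (hmemT _ hbm) b' (hmemT _ hbm') hne
    constructor
    · by_contra hc
      push_neg at hc
      exact hnov (Or.inl ⟨by omega, by omega⟩)
    · by_contra hc
      push_neg at hc
      exact hnov (Or.inr ⟨by omega, by omega⟩)
  -- interval lists
  set lm₁ := l.map (fun b : ℕ × ℕ × ℕ => (b.1, b.2.2)) with hlm₁
  set lm₂ := l.map (fun b : ℕ × ℕ × ℕ => (b.2.1, b.2.2)) with hlm₂
  have hdm₁ : lm₁.Pairwise (fun p q => p.1 + p.2 ≤ q.1 ∨ q.1 + q.2 ≤ p.1) :=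
    List.pairwise_map.mpr (hdis.imp (fun h => h.1))
  have hdm₂ : lm₂.Pairwise (fun p q => p.1 + p.2 ≤ q.1 ∨ q.1 + q.2 ≤ p.1) :=
    List.pairwise_map.mpr (hdis.imp (fun h => h.2))
  have hb₁ : ∀ p ∈ lm₁, 1 ≤ p.2 ∧ p.1 + p.2 ≤ n := by
    intro p hp
    obtain ⟨b, hbm, rfl⟩ := List.mem_map.mp hp
    have := hT b (hmemT _ hbm)
    exact ⟨this.1, h₁ ▸ this.2.1⟩
  have hb₂ : ∀ p ∈ lm₂, 1 ≤ p.2 ∧ p.1 + p.2 ≤ n := by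
    intro p hp
    obtain ⟨b, hbm, rfl⟩ := List.mem_map.mp hp
    have := hT b (hmemT _ hbm)
    exact ⟨this.1, h₂ ▸ this.2.2.1⟩
  obtain ⟨L₁, hL₁p, hL₁g⟩ := MCPAux.exists_good n lm₁ hdm₁ hb₁
  obtain ⟨L₂, hL₂p, hL₂g⟩ := MCPAux.exists_good n lm₂ hdm₂ hb₂
  have hg₁ : MCPAux.Good 0 (0 + s₁.length) L₁ := by rw [h₁, Nat.zero_add]; exact hL₁g
  have hg₂ : MCPAux.Good 0 (0 + s₂.length) L₂ := by rw [h₂, Nat.zero_add]; exact hL₂g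
  obtain ⟨u₁, hc₁, hsm₁⟩ := MCPAux.cut_multiset L₁ s₁ 0 hg₁
  obtain ⟨u₂, hc₂, hsm₂⟩ := MCPAux.cut_multiset L₂ s₂ 0 hg₂
  -- block pieces are a permutation of each other
  have hbl : (L₁.map (fun p : ℕ × ℕ => (s₁.drop (p.1 - 0)).take p.2)).Perm
      (L₂.map (fun p : ℕ × ℕ => (s₂.drop (p.1 - 0)).take p.2)) := by
    refine (hL₁p.map _).trans (List.Perm.trans ?_ (hL₂p.map _).symm)
    rw [hlm₁, hlm₂, List.map_map, List.map_map]
    apply List.Perm.of_eq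
    apply List.map_congr_left
    intro b hbm
    have := (hT b (hmemT _ hbm)).2.2.2
    simpa using this
  have hbl' : ((L₁.map (fun p : ℕ × ℕ => (s₁.drop (p.1 - 0)).take p.2) : List (List α)) :
      Multiset (List α)) = ↑(L₂.map (fun p : ℕ × ℕ => (s₂.drop (p.1 - 0)).take p.2)) :=
    Multiset.coe_eq_coe.mpr hbl
  have hfl : (((L₁.map (fun p : ℕ × ℕ => (s₁.drop (p.1 - 0)).take p.2)).flatten : List α) :
      Multiset α) = ↑((L₂.map (fun p : ℕ × ℕ => (s₂.drop (p.1 - 0)).take p.2)).flatten) :=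
    Multiset.coe_eq_coe.mpr (MCPAux.flatten_perm hbl)
  have hu : (u₁ : Multiset α) = ↑u₂ := by
    have h12 : (s₁ : Multiset α) = ↑s₂ := Multiset.coe_eq_coe.mpr hrel
    have := hsm₁.symm.trans (h12.trans hsm₂)
    rw [hfl] at this
    exact add_left_cancel this
  have hPP : (MCPAux.cut s₁ 0 L₁).Perm (MCPAux.cut s₂ 0 L₂) := by
    rw [← Multiset.coe_eq_coe, hc₁, hc₂, hbl']
    congr 1
    rw [← Multiset.map_coe, ← Multiset.map_coe, hu]
  -- length computation
  have hlen₁ := MCPAux.cut_length L₁ s₁ 0 hg₁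
  have hsum : (L₁.map (fun p : ℕ × ℕ => p.2 - 1)).sum = ∑ b ∈ T, (b.2.2 - 1) := by
    rw [(hL₁p.map _).sum_eq, hlm₁, List.map_map]
    exact Finset.sum_map_toList T (fun b => b.2.2 - 1)
  rw [h₁, hsum] at hlen₁
  apply Nat.sInf_le
  refine ⟨MCPAux.cut s₁ 0 L₁, MCPAux.cut s₂ 0 L₂,
    ⟨hPP, MCPAux.cut_ne_nil L₁ s₁ 0 hg₁, MCPAux.cut_flatten L₁ s₁ 0,
      MCPAux.cut_flatten L₂ s₂ 0⟩, by omega⟩
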